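/- Let $(a_n)_{n\ge1}$ be complex numbers, $\alpha,\beta,x$ real, such that the series $\sum_{n=1}^\infty a_n e^{i(\alpha n+\beta)x}$ converges, and for $m\ge0$ let $\rho_m=\sum_{n=m+1}^\infty a_n e^{i(\alpha n+\beta)x}$ denote its tails. Let $r_1,\dots,r_p$ be complex numbers and $E_k$ the $k$-th elementary symmetric polynomial in $r_1,\dots,r_p$. Then $\sum_{n=1}^\infty L_{r_1\dots r_p}(a_n)\,e^{i(\alpha(n+p)+\beta)x} = \sum_{k=0}^p(-1)^{p-k}e^{i\alpha(p-k)x}E_{p-k}\,\rho_k.$ -/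

import Mathlib

open Filter Finset

/-- `Lop r p a n = L_{r_1 … r_p}(a_n)`. -/
noncomputable def Lop (r : ℕ → ℂ) : ℕ → (ℕ → ℂ) → ℕ → ℂ
  | 0 => fun a n => a n
  | p + 1 => fun a n => Lop r p a (n + 1) - r (p + 1) * Lop r p a n

noncomputable def Esym (r : ℕ → ℂ) (p k : ℕ) : ℂ :=
  ∑ s ∈ (Finset.Icc 1 p).powersetCard k, ∏ j ∈ s, r j

noncomputable def Dc (r : ℕ → ℂ) : ℕ → ℕ → ℂ
  | 0, 0 => 1
  | 0, _+1 => 0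
  | p+1, 0 => -r (p+1) * Dc r p 0
  | p+1, k+1 => Dc r p k - r (p+1) * Dc r p (k+1)

lemma Dc_gt (r : ℕ → ℂ) : ∀ p k, p < k → Dc r p k = 0 := by
  intro p
  induction p with
  | zero => intro k hk; match k, hk with | k+1, _ => simp [Dc]
  | succ p ih =>
    intro k hk
    match k, hk with
    | k+1, hk => simp [Dc, ih k (by omega), ih (k+1) (by omega)]

lemma Esym_zero (r : ℕ → ℂ) (p : ℕ) : Esym r p 0 = 1 := by simp [Esym]

lemma Esym_gt (r : ℕ → ℂ) (p k : ℕ) (h : p < k) : Esym r p k = 0 := by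
  rw [Esym, Finset.powersetCard_eq_empty.2 (by simpa using h), Finset.sum_empty]

lemma Esym_succ (r : ℕ → ℂ) (p k : ℕ) :
    Esym r (p+1) (k+1) = Esym r p (k+1) + r (p+1) * Esym r p k := by
  have hx : (p+1) ∉ Finset.Icc 1 p := by simp
  have hins : Finset.Icc 1 (p+1) = insert (p+1) (Finset.Icc 1 p) := by
    ext m; simp [Finset.mem_Icc]; omega
  have hdisj : Disjoint ((Finset.Icc 1 p).powersetCard (k+1))
      (((Finset.Icc 1 p).powersetCard k).image (insert (p+1))) := by
    rw [Finset.disjoint_left]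
    intro s hs hs'
    rw [Finset.mem_powersetCard] at hs
    obtain ⟨t, ht, rfl⟩ := Finset.mem_image.1 hs'
    exact hx (hs.1 (Finset.mem_insert_self _ _))
  rw [Esym, hins, Finset.powersetCard_succ_insert hx, Finset.sum_union hdisj]
  congr 1
  rw [Finset.sum_image]
  · rw [Esym, Finset.mul_sum]
    apply Finset.sum_congr rfl
    intro t ht
    rw [Finset.mem_powersetCard] at ht
    rw [Finset.prod_insert (fun h => hx (ht.1 h))]
  · intro t ht u hu h
    rw [Finset.mem_coe, Finset.mem_powersetCard] at ht hu
    have h1 : (p+1) ∉ t := fun h' => hx (ht.1 h')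
    have h2 : (p+1) ∉ u := fun h' => hx (hu.1 h')
    rw [← Finset.erase_insert h1, ← Finset.erase_insert h2, h]

lemma Dc_eq (r : ℕ → ℂ) : ∀ p k, k ≤ p → Dc r p k = (-1:ℂ)^(p-k) * Esym r p (p-k) := by
  intro p
  induction p with
  | zero =>
    intro k hk
    interval_cases k
    simp [Dc, Esym_zero]
  | succ p ih =>
    intro k hk
    match k with
    | 0 =>
      have h1 : Esym r (p+1) (p+1) = Esym r p (p+1) + r (p+1) * Esym r p p :=
        Esym_succ r p p
      rw [Esym_gt r p (p+1) (by omega)] at h1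
      show -r (p+1) * Dc r p 0 = _
      rw [ih 0 (by omega)]
      simp only [Nat.sub_zero, h1]
      ring
    | k+1 =>
      show Dc r p k - r (p+1) * Dc r p (k+1) = _
      rcases Nat.lt_or_ge k p with hlt | hge
      · obtain ⟨j, hj⟩ : ∃ j, p = k + j + 1 := ⟨p - k - 1, by omega⟩
        subst hj
        rw [ih k (by omega), ih (k+1) (by omega)]
        have e1 : k + j + 1 - k = j + 1 := by omega
        have e2 : k + j + 1 - (k+1) = j := by omega
        have e3 : k + j + 1 + 1 - (k+1) = j + 1 := by omega
        rw [e1, e2, e3, Esym_succ r (k+j+1) j]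
        ring
      · have hkp : k = p := by omega
        subst hkp
        rw [ih k le_rfl, Dc_gt r k (k+1) (by omega)]
        simp [Esym_zero]

lemma Lop_eq (r : ℕ → ℂ) (a : ℕ → ℂ) :
    ∀ p n, Lop r p a n = ∑ k ∈ range (p+1), Dc r p k * a (n + k) := by
  intro p
  induction p with
  | zero => intro n; simp [Lop, Dc]
  | succ p ih =>
    intro n
    show Lop r p a (n+1) - r (p+1) * Lop r p a n = _
    rw [ih (n+1), ih n,
      Finset.sum_range_succ' (fun k => Dc r (p+1) k * a (n + k)) (p+1),
      Finset.sum_range_succ' (fun k => Dc r p k * a (n + k)) p]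
    simp only [Dc]
    have hz : Dc r p (p+1) = 0 := Dc_gt r p (p+1) (by omega)
    have h1 : ∑ k ∈ range (p+1), (Dc r p k - r (p+1) * Dc r p (k+1)) * a (n + (k+1))
        = (∑ k ∈ range (p+1), Dc r p k * a (n + (k+1)))
          - (∑ k ∈ range p, r (p+1) * Dc r p (k+1) * a (n + (k+1))) := by
      simp only [sub_mul]
      rw [Finset.sum_sub_distrib]
      congr 1
      rw [Finset.sum_range_succ, hz]
      simp [mul_assoc]
    rw [h1]
    have h2 : ∀ k, n + 1 + k = n + (k + 1) := fun k => by omega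
    simp only [h2, Nat.add_zero, mul_add, Finset.mul_sum, mul_assoc]
    ring

theorem stmt_8 (a : ℕ → ℂ) (α β x : ℝ) (p : ℕ) (hp : 1 ≤ p) (r : ℕ → ℂ)
    (ρ : ℕ → ℂ)
    (hρ : ∀ m, Tendsto (fun N => ∑ n ∈ Finset.Ico m N,
      a (n + 1) * Complex.exp (((α * ((n : ℝ) + 1) + β) * x) * Complex.I)) atTop (nhds (ρ m))) :
    Tendsto (fun N => ∑ n ∈ range N,
      Lop r p a (n + 1) *
        Complex.exp (((α * (((n : ℝ) + 1) + (p : ℝ)) + β) * x) * Complex.I)) atTop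
      (nhds (∑ k ∈ range (p + 1),
        (-1 : ℂ) ^ (p - k) * Complex.exp (((α * ((p : ℝ) - (k : ℝ))) * x) * Complex.I) *
          (∑ s ∈ (Finset.Icc 1 p).powersetCard (p - k), ∏ j ∈ s, r j) * ρ k)) := by
  set g : ℕ → ℂ := fun m => a (m + 1) * Complex.exp (((α * ((m : ℝ) + 1) + β) * x) * Complex.I)
    with hg
  have key : ∀ N, (∑ n ∈ range N, Lop r p a (n + 1) *
      Complex.exp (((α * (((n : ℝ) + 1) + (p : ℝ)) + β) * x) * Complex.I))
      = ∑ k ∈ range (p + 1),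
          (Dc r p k * Complex.exp (((α * ((p : ℝ) - (k : ℝ))) * x) * Complex.I)) *
            ∑ m ∈ Finset.Ico k (N + k), g m := by
    intro N
    have step1 : ∀ n : ℕ, Lop r p a (n + 1) *
        Complex.exp (((α * (((n : ℝ) + 1) + (p : ℝ)) + β) * x) * Complex.I)
        = ∑ k ∈ range (p + 1),
            (Dc r p k * Complex.exp (((α * ((p : ℝ) - (k : ℝ))) * x) * Complex.I)) * g (n + k) := by
      intro n
      rw [Lop_eq r a p (n + 1), Finset.sum_mul]
      apply Finset.sum_congr rfl
      intro k _
      have hexp : Complex.exp (((α * (((n : ℝ) + 1) + (p : ℝ)) + β) * x) * Complex.I)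
          = Complex.exp (((α * ((p : ℝ) - (k : ℝ))) * x) * Complex.I) *
            Complex.exp (((α * (((n + k : ℕ) : ℝ) + 1) + β) * x) * Complex.I) := by
        rw [← Complex.exp_add]
        congr 1
        push_cast
        ring
      rw [hexp, hg]
      have : n + 1 + k = n + k + 1 := by omega
      rw [this]
      ring
    simp only [step1]
    rw [Finset.sum_comm]
    apply Finset.sum_congr rfl
    intro k _
    rw [← Finset.mul_sum]
    congr 1
    rw [Finset.sum_Ico_eq_sum_range]
    have : N + k - k = N := by omega
    rw [this]
    apply Finset.sum_congr rfl
    intro n _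
    congr 1
    omega
  simp only [key]
  have hlim : ∀ k ∈ range (p + 1),
      Tendsto (fun N => (Dc r p k * Complex.exp (((α * ((p : ℝ) - (k : ℝ))) * x) * Complex.I)) *
        ∑ m ∈ Finset.Ico k (N + k), g m) atTop
      (nhds ((Dc r p k * Complex.exp (((α * ((p : ℝ) - (k : ℝ))) * x) * Complex.I)) * ρ k)) := by
    intro k _
    exact Tendsto.const_mul _ ((hρ k).comp (tendsto_add_atTop_nat k))
  have := tendsto_finset_sum (range (p + 1)) hlim
  convert this using 2
  apply Finset.sum_congr rfl
  intro k hk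
  rw [Finset.mem_range] at hk
  rw [Dc_eq r p k (by omega)]
  rw [Esym]
  ring
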